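/- arXiv:2604.13172 — 3 statements merged into one kernel-verified Lean document; each statement's English description precedes it below -/
import Mathlib

section
/- For any operator $A$ on a $D$-dimensional Hilbert space and any ensemble $\mathcal{E}$: $\|A\|_{\mathcal{E}} \le \sqrt{D\, \|\tilde\rho_{\mathcal{E}}\|_\infty}\, \|A\|$, where $\tilde\rho_{\mathcal{E}} = \mathbb{E}_{\psi\sim\mathcal{E}} \langle\psi|\psi\rangle\, |\psi\rangle\langle\psi|$, $\|\cdot\|_\infty$ is the operator norm (largest eigenvalue of the PSD operator $\tilde\rho_{\mathcal{E}}$), and $\|A\| = \sqrt{\mathrm{tr}(A^\dagger A)/D}$ is the normalized Frobenius norm. -/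
open scoped InnerProductSpace
open ContinuousLinearMap

lemma trace_re_formula {D : ℕ} (f : EuclideanSpace ℂ (Fin D) →L[ℂ] EuclideanSpace ℂ (Fin D)) :
    (LinearMap.trace ℂ (EuclideanSpace ℂ (Fin D))
      (f : EuclideanSpace ℂ (Fin D) →ₗ[ℂ] EuclideanSpace ℂ (Fin D)))
      = ∑ j, f (EuclideanSpace.single j (1:ℂ)) j := by
  rw [LinearMap.trace_eq_matrix_trace ℂ (EuclideanSpace.basisFun (Fin D) ℂ).toBasis]
  simp [Matrix.trace, Matrix.diag, LinearMap.toMatrix_apply,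
    OrthonormalBasis.coe_toBasis_repr_apply, OrthonormalBasis.coe_toBasis,
    EuclideanSpace.basisFun_repr, EuclideanSpace.basisFun_apply]

/-- `‖A‖_𝓔 ≤ sqrt (D ‖ρ̃_𝓔‖_∞) ‖A‖`, where `ρ̃_𝓔 = 𝔼_ψ ⟨ψ|ψ⟩ |ψ⟩⟨ψ|`,
`‖·‖_∞` is the operator norm, and `‖A‖² = tr(A†A)/D` is the normalized
Frobenius norm. -/
theorem ensemble_norm_le_frobenius {D : ℕ} {ι : Type*} [Fintype ι]
    (p : ι → ℝ) (hp0 : ∀ i, 0 ≤ p i) (hp1 : ∑ i, p i = 1)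
    (ψ : ι → EuclideanSpace ℂ (Fin D))
    (A : EuclideanSpace ℂ (Fin D) →L[ℂ] EuclideanSpace ℂ (Fin D)) :
    Real.sqrt (∑ i, p i * ‖⟪ψ i, A (ψ i)⟫_ℂ‖ ^ 2)
      ≤ Real.sqrt ((D : ℝ) *
          ‖∑ i, ((p i * ‖ψ i‖ ^ 2 : ℝ) : ℂ) • ((innerSL ℂ (ψ i)).smulRight (ψ i))‖)
        * Real.sqrt
            ((LinearMap.trace ℂ (EuclideanSpace ℂ (Fin D))
              ((adjoint A ∘L A : EuclideanSpace ℂ (Fin D) →L[ℂ] EuclideanSpace ℂ (Fin D)) :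
                EuclideanSpace ℂ (Fin D) →ₗ[ℂ] EuclideanSpace ℂ (Fin D))).re / D) := by
  set c : ι → ℝ := fun i => p i * ‖ψ i‖ ^ 2 with hc
  set ρ : EuclideanSpace ℂ (Fin D) →L[ℂ] EuclideanSpace ℂ (Fin D) := ∑ i, ((c i : ℝ) : ℂ) • ((innerSL ℂ (ψ i)).smulRight (ψ i)) with hρ
  set e : Fin D → EuclideanSpace ℂ (Fin D) := fun j => EuclideanSpace.single j (1:ℂ) with he
  -- evaluate ρ quadratic form
  have hc0 : ∀ i, 0 ≤ c i := fun i => mul_nonneg (hp0 i) (sq_nonneg _)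
  have K1 : ∀ w : EuclideanSpace ℂ (Fin D), (⟪w, ρ w⟫_ℂ).re = ∑ i, c i * ‖⟪ψ i, w⟫_ℂ‖ ^ 2 := by
    intro w
    have : ⟪w, ρ w⟫_ℂ = ∑ i, ((c i : ℂ) * (‖⟪ψ i, w⟫_ℂ‖ ^ 2 : ℝ)) := by
      rw [hρ]
      simp only [ContinuousLinearMap.sum_apply, ContinuousLinearMap.smul_apply,
        ContinuousLinearMap.smulRight_apply, innerSL_apply_apply, inner_sum, inner_smul_right]
      refine Finset.sum_congr rfl fun i _ => ?_
      congr 1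
      rw [← inner_conj_symm w (ψ i), Complex.mul_conj, Complex.normSq_eq_norm_sq]
    rw [this, Complex.re_sum]
    refine Finset.sum_congr rfl fun i _ => ?_
    rw [← Complex.ofReal_mul, Complex.ofReal_re]
  have K2 : ∀ w : EuclideanSpace ℂ (Fin D), (⟪w, ρ w⟫_ℂ).re ≤ ‖ρ‖ * ‖w‖ ^ 2 := by
    intro w
    calc (⟪w, ρ w⟫_ℂ).re ≤ ‖⟪w, ρ w⟫_ℂ‖ := Complex.re_le_norm _
      _ ≤ ‖w‖ * ‖ρ w‖ := norm_inner_le_norm _ _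
      _ ≤ ‖w‖ * (‖ρ‖ * ‖w‖) := by
          gcongr
          exact ρ.le_opNorm w
      _ = ‖ρ‖ * ‖w‖ ^ 2 := by ring
  have hentry : ∀ (v : EuclideanSpace ℂ (Fin D)) (j : Fin D), v j = ⟪e j, v⟫_ℂ := by
    intro v j
    rw [he]
    rw [EuclideanSpace.inner_single_left]
    simp
  have hnormsq : ∀ v : EuclideanSpace ℂ (Fin D), ‖v‖ ^ 2 = ∑ j, ‖v j‖ ^ 2 := by
    intro v
    rw [EuclideanSpace.norm_eq, Real.sq_sqrt]
    positivity
  have K3 : ∑ i, c i * ‖A (ψ i)‖ ^ 2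
      = ∑ j, (⟪adjoint A (e j), ρ (adjoint A (e j))⟫_ℂ).re := by
    have key : ∀ i j, ‖(A (ψ i)) j‖ = ‖⟪ψ i, adjoint A (e j)⟫_ℂ‖ := by
      intro i j
      rw [hentry (A (ψ i)) j, ← adjoint_inner_left, norm_inner_symm]
    calc ∑ i, c i * ‖A (ψ i)‖ ^ 2
        = ∑ i, ∑ j, c i * ‖⟪ψ i, adjoint A (e j)⟫_ℂ‖ ^ 2 := by
          refine Finset.sum_congr rfl fun i _ => ?_
          rw [hnormsq, Finset.mul_sum]
          exact Finset.sum_congr rfl fun j _ => by rw [key i j]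
      _ = _ := by
          rw [Finset.sum_comm]
          exact Finset.sum_congr rfl fun j _ => (K1 _).symm
  set T : ℝ := (LinearMap.trace ℂ (EuclideanSpace ℂ (Fin D))
      ((adjoint A ∘L A : EuclideanSpace ℂ (Fin D) →L[ℂ] EuclideanSpace ℂ (Fin D)) : EuclideanSpace ℂ (Fin D) →ₗ[ℂ] EuclideanSpace ℂ (Fin D))).re with hT
  have hTr : T = ∑ k, ‖A (e k)‖ ^ 2 := by
    rw [hT, trace_re_formula, Complex.re_sum]
    refine Finset.sum_congr rfl fun k _ => ?_
    rw [ContinuousLinearMap.comp_apply,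
      hentry (adjoint A (A (e k))) k, adjoint_inner_right]
    exact real_inner_self_eq_norm_sq (A (e k)) ▸ by
      simpa using (inner_self_eq_norm_sq (𝕜 := ℂ) (A (e k)))
  have K4 : ∑ j, ‖adjoint A (e j)‖ ^ 2 = T := by
    rw [hTr]
    have key : ∀ j k, ‖(adjoint A (e j)) k‖ = ‖(A (e k)) j‖ := by
      intro j k
      rw [hentry (adjoint A (e j)) k, adjoint_inner_right,
        norm_inner_symm, ← hentry (A (e k)) j]
    calc ∑ j, ‖adjoint A (e j)‖ ^ 2
        = ∑ j, ∑ k, ‖(A (e k)) j‖ ^ 2 := by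
          refine Finset.sum_congr rfl fun j _ => ?_
          rw [hnormsq]
          exact Finset.sum_congr rfl fun k _ => by rw [key j k]
      _ = ∑ k, ‖A (e k)‖ ^ 2 := by
          rw [Finset.sum_comm]
          exact Finset.sum_congr rfl fun k _ => (hnormsq _).symm
  have hT0 : 0 ≤ T := by rw [hTr]; positivity
  have hX : ∑ i, p i * ‖⟪ψ i, A (ψ i)⟫_ℂ‖ ^ 2 ≤ ‖ρ‖ * T := by
    calc ∑ i, p i * ‖⟪ψ i, A (ψ i)⟫_ℂ‖ ^ 2
        ≤ ∑ i, c i * ‖A (ψ i)‖ ^ 2 := by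
          refine Finset.sum_le_sum fun i _ => ?_
          have h1 : ‖⟪ψ i, A (ψ i)⟫_ℂ‖ ≤ ‖ψ i‖ * ‖A (ψ i)‖ := norm_inner_le_norm _ _
          have h2 : ‖⟪ψ i, A (ψ i)⟫_ℂ‖ ^ 2 ≤ (‖ψ i‖ * ‖A (ψ i)‖) ^ 2 :=
            pow_le_pow_left₀ (norm_nonneg _) h1 2
          calc p i * ‖⟪ψ i, A (ψ i)⟫_ℂ‖ ^ 2 ≤ p i * (‖ψ i‖ * ‖A (ψ i)‖) ^ 2 :=
                mul_le_mul_of_nonneg_left h2 (hp0 i)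
            _ = c i * ‖A (ψ i)‖ ^ 2 := by rw [hc]; ring
      _ = ∑ j, (⟪adjoint A (e j), ρ (adjoint A (e j))⟫_ℂ).re := K3
      _ ≤ ∑ j, ‖ρ‖ * ‖adjoint A (e j)‖ ^ 2 := Finset.sum_le_sum fun j _ => K2 _
      _ = ‖ρ‖ * T := by rw [← Finset.mul_sum, K4]
  rcases Nat.eq_zero_or_pos D with hD | hD
  · have hz : ∀ i, ⟪ψ i, A (ψ i)⟫_ℂ = 0 := by
      intro i
      subst hD
      have : ψ i = 0 := Subsingleton.elim _ _
      rw [this]; simp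
    simp only [hz]
    simp only [norm_zero]
    rw [show (0:ℝ) ^ 2 = 0 by ring]
    simp only [mul_zero, Finset.sum_const_zero, Real.sqrt_zero]
    exact mul_nonneg (Real.sqrt_nonneg _) (Real.sqrt_nonneg _)
  · have hDne : (D : ℝ) ≠ 0 := Nat.cast_ne_zero.mpr hD.ne'
    rw [← Real.sqrt_mul (mul_nonneg (Nat.cast_nonneg D) (norm_nonneg ρ))]
    apply Real.sqrt_le_sqrt
    calc ∑ i, p i * ‖⟪ψ i, A (ψ i)⟫_ℂ‖ ^ 2 ≤ ‖ρ‖ * T := hX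
      _ = (D : ℝ) * ‖ρ‖ * (T / D) := by
          have h : (D : ℝ) * (T / D) = T := by field_simp
          rw [mul_comm (D : ℝ) ‖ρ‖, mul_assoc, h]
end

section
/- Let $\Lambda > 0$, $\tau > 0$, and let $O = \sum_\lambda O_\lambda$ be a decomposition into pairwise Hilbert–Schmidt-orthogonal eigenoperators of $\mathrm{ad}_H$ with $|\lambda| \le \Lambda$ for all $\lambda$. Let $\|\cdot\|_{\mathcal{E}}$ be a seminorm induced by a positive-semidefinite Hermitian form, and suppose $\|B\|_{\mathcal{E}}^2 \le \nu \|B\|^2$ for every operator $B$ of the form $B = \sum_{|\lambda-\mu|\le 1/\tau} O_\lambda$ ($\mu \in \mathbb{R}$). Then $\|O\|_{\mathcal{E}}^2 \le \nu(\Lambda \tau + 1)\|O\|^2$. -/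
open ContinuousLinearMap

private lemma cs_seminorm' {V : Type*} [AddCommGroup V] [Module ℂ V]
    (innerE : V → V → ℂ)
    (hsymm : ∀ A B, innerE A B = starRingEnd ℂ (innerE B A))
    (haddr : ∀ A B C, innerE A (B + C) = innerE A B + innerE A C)
    (hsmulr : ∀ (c : ℂ) A B, innerE A (c • B) = c * innerE A B)
    (hpos : ∀ A, 0 ≤ (innerE A A).re)
    (A B : V) :
    (innerE (A + B) (A + B)).re ≤
      (Real.sqrt (innerE A A).re + Real.sqrt (innerE B B).re) ^ 2 := by
  have haddl : ∀ A B C, innerE (A + B) C = innerE A C + innerE B C := by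
    intro A B C
    rw [hsymm, haddr, map_add, ← hsymm, ← hsymm]
  have hsmull : ∀ (t : ℝ) A B, innerE ((t : ℂ) • A) B = (t : ℂ) * innerE A B := by
    intro t A B
    rw [hsymm, hsmulr, map_mul, Complex.conj_ofReal, ← hsymm]
  have hre : ∀ A B, (innerE B A).re = (innerE A B).re := by
    intro A B
    rw [hsymm A B, Complex.conj_re]
  set x := (innerE A A).re with hx
  set y := (innerE A B).re with hy
  set z := (innerE B B).re with hz
  have hquad : ∀ t : ℝ, 0 ≤ z * (t * t) + (2 * y) * t + x := by
    intro t
    have h0 := hpos (A + (t : ℂ) • B)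
    have hexp : innerE (A + (t : ℂ) • B) (A + (t : ℂ) • B)
        = innerE A A + (t : ℂ) * innerE B A
          + ((t : ℂ) * innerE A B + (t : ℂ) * ((t : ℂ) * innerE B B)) := by
      rw [haddr, hsmulr, haddl, haddl, hsmull, hsmull]; ring
    rw [hexp] at h0
    simp only [Complex.add_re, Complex.re_ofReal_mul, hre A B] at h0
    nlinarith [h0]
  have hx0 : 0 ≤ x := hpos A
  have hz0 : 0 ≤ z := hpos B
  have hd := discrim_le_zero hquad
  rw [discrim] at hd
  have hy2 : y ^ 2 ≤ x * z := by nlinarith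
  have hyb : y ≤ Real.sqrt x * Real.sqrt z := by
    calc y ≤ |y| := le_abs_self y
    _ = Real.sqrt (y ^ 2) := (Real.sqrt_sq_eq_abs y).symm
    _ ≤ Real.sqrt (x * z) := Real.sqrt_le_sqrt hy2
    _ = Real.sqrt x * Real.sqrt z := Real.sqrt_mul hx0 z
  have hexp : (innerE (A + B) (A + B)).re = x + 2 * y + z := by
    rw [haddr, haddl, haddl]
    simp only [Complex.add_re, hre A B]
    ring
  rw [hexp]
  nlinarith [Real.sq_sqrt hx0, Real.sq_sqrt hz0, Real.sqrt_nonneg x, Real.sqrt_nonneg z]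

private lemma trace_re_nonneg' {D : ℕ}
    (A : EuclideanSpace ℂ (Fin D) →L[ℂ] EuclideanSpace ℂ (Fin D)) :
    0 ≤ (LinearMap.trace ℂ (EuclideanSpace ℂ (Fin D))
      ((adjoint A ∘L A : EuclideanSpace ℂ (Fin D) →L[ℂ] EuclideanSpace ℂ (Fin D)) :
        EuclideanSpace ℂ (Fin D) →ₗ[ℂ] EuclideanSpace ℂ (Fin D))).re := by
  rw [LinearMap.trace_eq_matrix_trace ℂ ((EuclideanSpace.basisFun (Fin D) ℂ).toBasis)]
  rw [Matrix.trace]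
  rw [Complex.re_sum]
  apply Finset.sum_nonneg
  intro i _
  rw [Matrix.diag_apply, LinearMap.toMatrix_apply]
  simp only [OrthonormalBasis.coe_toBasis, OrthonormalBasis.coe_toBasis_repr_apply,
    EuclideanSpace.basisFun_apply, OrthonormalBasis.repr_apply_apply]
  simp only [ContinuousLinearMap.coe_comp, LinearMap.comp_apply, ContinuousLinearMap.coe_coe,
    Function.comp_apply]
  rw [adjoint_inner_right]
  exact inner_self_nonneg (𝕜 := ℂ)

private lemma trace_sum_sum' {D : ℕ} {ι : Type*} [Fintype ι]
    (O : ι → (EuclideanSpace ℂ (Fin D) →L[ℂ] EuclideanSpace ℂ (Fin D)))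
    (s t : Finset ι) :
    LinearMap.trace ℂ (EuclideanSpace ℂ (Fin D))
      ((adjoint (∑ i ∈ s, O i) ∘L (∑ j ∈ t, O j) :
        EuclideanSpace ℂ (Fin D) →L[ℂ] EuclideanSpace ℂ (Fin D)) :
        EuclideanSpace ℂ (Fin D) →ₗ[ℂ] EuclideanSpace ℂ (Fin D))
    = ∑ i ∈ s, ∑ j ∈ t,
      LinearMap.trace ℂ (EuclideanSpace ℂ (Fin D))
      ((adjoint (O i) ∘L O j :
        EuclideanSpace ℂ (Fin D) →L[ℂ] EuclideanSpace ℂ (Fin D)) :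
        EuclideanSpace ℂ (Fin D) →ₗ[ℂ] EuclideanSpace ℂ (Fin D)) := by
  rw [map_sum ContinuousLinearMap.adjoint O s, finset_sum_comp]
  rw [ContinuousLinearMap.coe_sum, map_sum]
  refine Finset.sum_congr rfl fun i _ => ?_
  rw [comp_finset_sum, ContinuousLinearMap.coe_sum, map_sum]

set_option maxHeartbeats 1000000 in
private lemma key_lemma {D : ℕ} {ι : Type*} [Fintype ι]
    (lam : ι → ℝ)
    (O : ι → (EuclideanSpace ℂ (Fin D) →L[ℂ] EuclideanSpace ℂ (Fin D)))
    (horth : ∀ i j, i ≠ j →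
      LinearMap.trace ℂ (EuclideanSpace ℂ (Fin D))
        ((adjoint (O i) ∘L O j :
            EuclideanSpace ℂ (Fin D) →L[ℂ] EuclideanSpace ℂ (Fin D)) :
          EuclideanSpace ℂ (Fin D) →ₗ[ℂ] EuclideanSpace ℂ (Fin D)) = 0)
    (τ ν : ℝ) (hτ : 0 < τ)
    (innerE : (EuclideanSpace ℂ (Fin D) →L[ℂ] EuclideanSpace ℂ (Fin D)) →
      (EuclideanSpace ℂ (Fin D) →L[ℂ] EuclideanSpace ℂ (Fin D)) → ℂ)
    (hsymm : ∀ A B, innerE A B = starRingEnd ℂ (innerE B A))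
    (haddr : ∀ A B C, innerE A (B + C) = innerE A B + innerE A C)
    (hsmulr : ∀ (c : ℂ) A B, innerE A (c • B) = c * innerE A B)
    (hpos : ∀ A, 0 ≤ (innerE A A).re)
    (hwindow : ∀ μ : ℝ,
      (innerE (∑ i ∈ Finset.univ.filter (fun i => |lam i - μ| ≤ 1 / τ), O i)
          (∑ i ∈ Finset.univ.filter (fun i => |lam i - μ| ≤ 1 / τ), O i)).re
        ≤ ν * (LinearMap.trace ℂ (EuclideanSpace ℂ (Fin D))
            ((adjoint (∑ i ∈ Finset.univ.filter (fun i => |lam i - μ| ≤ 1 / τ), O i)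
                ∘L (∑ i ∈ Finset.univ.filter (fun i => |lam i - μ| ≤ 1 / τ), O i) :
              EuclideanSpace ℂ (Fin D) →L[ℂ] EuclideanSpace ℂ (Fin D)) :
              EuclideanSpace ℂ (Fin D) →ₗ[ℂ] EuclideanSpace ℂ (Fin D))).re) :
    ∀ (n : ℕ) (c : ℝ), (∀ i, c < lam i → lam i ≤ c + n * (2 / τ)) →
      (innerE (∑ i ∈ Finset.univ.filter (fun i => c < lam i), O i)
          (∑ i ∈ Finset.univ.filter (fun i => c < lam i), O i)).re
        ≤ ν * n * (LinearMap.trace ℂ (EuclideanSpace ℂ (Fin D))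
            ((adjoint (∑ i ∈ Finset.univ.filter (fun i => c < lam i), O i)
                ∘L (∑ i ∈ Finset.univ.filter (fun i => c < lam i), O i) :
              EuclideanSpace ℂ (Fin D) →L[ℂ] EuclideanSpace ℂ (Fin D)) :
              EuclideanSpace ℂ (Fin D) →ₗ[ℂ] EuclideanSpace ℂ (Fin D))).re := by
  classical
  have hE0 : (innerE 0 0).re = 0 := by
    have h := haddr 0 0 0
    rw [add_zero] at h
    have h0 : innerE (0 : EuclideanSpace ℂ (Fin D) →L[ℂ] EuclideanSpace ℂ (Fin D)) 0 = 0 :=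
      left_eq_add.mp h
    rw [h0, Complex.zero_re]
  have hT0 : (LinearMap.trace ℂ (EuclideanSpace ℂ (Fin D))
      ((adjoint (0 : EuclideanSpace ℂ (Fin D) →L[ℂ] EuclideanSpace ℂ (Fin D)) ∘L 0 :
        EuclideanSpace ℂ (Fin D) →L[ℂ] EuclideanSpace ℂ (Fin D)) :
        EuclideanSpace ℂ (Fin D) →ₗ[ℂ] EuclideanSpace ℂ (Fin D))).re = 0 := by
    simp
  intro n
  induction n with
  | zero =>
    intro c hc
    have hfil : Finset.univ.filter (fun i => c < lam i) = (∅ : Finset ι) := by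
      ext i
      simp only [Finset.mem_filter, Finset.mem_univ, true_and, Finset.notMem_empty, iff_false]
      intro h
      have := hc i h
      push_cast at this
      linarith
    rw [hfil]
    simp only [Finset.sum_empty]
    rw [hE0, hT0]
    simp
  | succ n IH =>
    intro c hc
    rcases Finset.eq_empty_or_nonempty (Finset.univ.filter (fun i => c < lam i)) with hs | hs
    · rw [hs]
      simp only [Finset.sum_empty]
      rw [hE0, hT0]
      simp
    · have himg : (Finset.image lam (Finset.univ.filter (fun i => c < lam i))).Nonempty :=
        hs.image lam
      set lam0 := (Finset.image lam (Finset.univ.filter (fun i => c < lam i))).min' himg with hlam0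
      obtain ⟨i0, hi0s, hi0⟩ := Finset.mem_image.mp (Finset.min'_mem _ himg)
      rw [← hlam0] at hi0
      have hclam0 : c < lam0 := by
        rw [← hi0]; exact (Finset.mem_filter.mp hi0s).2
      have hmin : ∀ i, c < lam i → lam0 ≤ lam i := by
        intro i hi
        exact Finset.min'_le _ _ (Finset.mem_image_of_mem lam
          (Finset.mem_filter.mpr ⟨Finset.mem_univ i, hi⟩))
      have hτ' : 0 < 1 / τ := by positivity
      have h2τeq : 2 / τ = 1 / τ + 1 / τ := by ring
      have hB := hwindow (lam0 + 1 / τ)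
      have hR := IH (lam0 + 2 / τ) (by
        intro i hi
        have h1 : c < lam i := by linarith
        have h2 := hc i h1
        push_cast at h2
        linarith)
      set W := Finset.univ.filter (fun i => |lam i - (lam0 + 1 / τ)| ≤ 1 / τ) with hW
      set V := Finset.univ.filter (fun i => lam0 + 2 / τ < lam i) with hV
      have hdisj : Disjoint W V := by
        rw [Finset.disjoint_left]
        intro i hiW hiV
        rw [hW, Finset.mem_filter] at hiW
        rw [hV, Finset.mem_filter] at hiV
        have h1 := abs_le.mp hiW.2
        linarith [h1.2, hiV.2]
      have hsplit : Finset.univ.filter (fun i => c < lam i) = W ∪ V := by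
        ext i
        simp only [hW, hV, Finset.mem_union, Finset.mem_filter, Finset.mem_univ, true_and]
        constructor
        · intro hi
          by_cases h2 : lam i ≤ lam0 + 2 / τ
          · left
            rw [abs_le]
            constructor
            · linarith [hmin i hi]
            · linarith
          · right; linarith
        · rintro (h | h)
          · have h1 := abs_le.mp h
            linarith [h1.1]
          · linarith
      rw [hsplit, Finset.sum_union hdisj]
      set B := ∑ i ∈ W, O i with hBdef
      set R := ∑ i ∈ V, O i with hRdef
      -- cross traces vanish
      have hcross1 : LinearMap.trace ℂ (EuclideanSpace ℂ (Fin D))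
          ((adjoint B ∘L R : EuclideanSpace ℂ (Fin D) →L[ℂ] EuclideanSpace ℂ (Fin D)) :
            EuclideanSpace ℂ (Fin D) →ₗ[ℂ] EuclideanSpace ℂ (Fin D)) = 0 := by
        rw [hBdef, hRdef, trace_sum_sum']
        apply Finset.sum_eq_zero
        intro i hi
        apply Finset.sum_eq_zero
        intro j hj
        exact horth i j (fun h => Finset.disjoint_left.mp hdisj hi (h ▸ hj))
      have hcross2 : LinearMap.trace ℂ (EuclideanSpace ℂ (Fin D))
          ((adjoint R ∘L B : EuclideanSpace ℂ (Fin D) →L[ℂ] EuclideanSpace ℂ (Fin D)) :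
            EuclideanSpace ℂ (Fin D) →ₗ[ℂ] EuclideanSpace ℂ (Fin D)) = 0 := by
        rw [hBdef, hRdef, trace_sum_sum']
        apply Finset.sum_eq_zero
        intro i hi
        apply Finset.sum_eq_zero
        intro j hj
        exact horth i j (fun h => Finset.disjoint_left.mp hdisj hj (h ▸ hi))
      have hTsplit : (LinearMap.trace ℂ (EuclideanSpace ℂ (Fin D))
          ((adjoint (B + R) ∘L (B + R) :
            EuclideanSpace ℂ (Fin D) →L[ℂ] EuclideanSpace ℂ (Fin D)) :
            EuclideanSpace ℂ (Fin D) →ₗ[ℂ] EuclideanSpace ℂ (Fin D))).re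
          = (LinearMap.trace ℂ (EuclideanSpace ℂ (Fin D))
              ((adjoint B ∘L B : EuclideanSpace ℂ (Fin D) →L[ℂ] EuclideanSpace ℂ (Fin D)) :
                EuclideanSpace ℂ (Fin D) →ₗ[ℂ] EuclideanSpace ℂ (Fin D))).re
            + (LinearMap.trace ℂ (EuclideanSpace ℂ (Fin D))
              ((adjoint R ∘L R : EuclideanSpace ℂ (Fin D) →L[ℂ] EuclideanSpace ℂ (Fin D)) :
                EuclideanSpace ℂ (Fin D) →ₗ[ℂ] EuclideanSpace ℂ (Fin D))).re := by
        have hcomp : (adjoint (B + R) ∘L (B + R) :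
            EuclideanSpace ℂ (Fin D) →L[ℂ] EuclideanSpace ℂ (Fin D))
            = (adjoint B ∘L B) + (adjoint B ∘L R) + ((adjoint R ∘L B) + (adjoint R ∘L R)) := by
          rw [map_add, ContinuousLinearMap.add_comp, ContinuousLinearMap.comp_add,
            ContinuousLinearMap.comp_add]
        rw [hcomp]
        simp only [ContinuousLinearMap.coe_add, map_add, hcross1, hcross2,
          add_zero, zero_add, Complex.add_re]
      rw [hTsplit]
      -- abbreviations for the four real numbers
      set a := (LinearMap.trace ℂ (EuclideanSpace ℂ (Fin D))
          ((adjoint B ∘L B : EuclideanSpace ℂ (Fin D) →L[ℂ] EuclideanSpace ℂ (Fin D)) :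
            EuclideanSpace ℂ (Fin D) →ₗ[ℂ] EuclideanSpace ℂ (Fin D))).re with ha'
      set b := (LinearMap.trace ℂ (EuclideanSpace ℂ (Fin D))
          ((adjoint R ∘L R : EuclideanSpace ℂ (Fin D) →L[ℂ] EuclideanSpace ℂ (Fin D)) :
            EuclideanSpace ℂ (Fin D) →ₗ[ℂ] EuclideanSpace ℂ (Fin D))).re with hb'
      have hx0 : 0 ≤ (innerE B B).re := hpos B
      have hy0 : 0 ≤ (innerE R R).re := hpos R
      have ha0 : 0 ≤ a := by rw [ha']; exact trace_re_nonneg' B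
      have hb0 : 0 ≤ b := by rw [hb']; exact trace_re_nonneg' R
      have hcs := cs_seminorm' innerE hsymm haddr hsmulr hpos B R
      have hBb : (innerE B B).re ≤ ν * a := hB
      by_cases hn : n = 0
      · subst hn
        have hVempty : V = (∅ : Finset ι) := by
          ext i
          simp only [hV, Finset.mem_filter, Finset.mem_univ, true_and, Finset.notMem_empty,
            iff_false]
          intro h
          have h1 : c < lam i := by linarith
          have h2 := hc i h1
          push_cast at h2
          linarith
        have hRzero : R = 0 := by rw [hRdef, hVempty, Finset.sum_empty]
        have hbzero : b = 0 := by
          rw [hb', hRzero]; simp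
        rw [hRzero] at hcs ⊢
        rw [hbzero]
        simp only [add_zero] at hcs ⊢
        rw [hE0, Real.sqrt_zero, add_zero] at hcs
        push_cast
        nlinarith [hBb, hcs, Real.sq_sqrt hx0]
      · have hn1 : 1 ≤ (n : ℝ) := by exact_mod_cast Nat.one_le_iff_ne_zero.mpr hn
        have hRb : (innerE R R).re ≤ ν * n * b := hR
        have hνa : 0 ≤ ν * a := le_trans hx0 hBb
        have hνnb : 0 ≤ ν * n * b := le_trans hy0 hRb
        have hνb : 0 ≤ ν * b := by
          by_contra hcon
          push_neg at hcon
          nlinarith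
        have hs1 : Real.sqrt (innerE B B).re ≤ Real.sqrt (ν * a) := Real.sqrt_le_sqrt hBb
        have hs2 : Real.sqrt (innerE R R).re ≤ Real.sqrt (ν * n * b) := Real.sqrt_le_sqrt hRb
        have h2 : (Real.sqrt (innerE B B).re + Real.sqrt (innerE R R).re) ^ 2
            ≤ (Real.sqrt (ν * a) + Real.sqrt (ν * n * b)) ^ 2 := by
          apply pow_le_pow_left₀ (by positivity) (add_le_add hs1 hs2)
        have e1 : Real.sqrt (ν * a) ^ 2 = ν * a := Real.sq_sqrt hνa
        have e2 : Real.sqrt (ν * n * b) ^ 2 = ν * n * b := Real.sq_sqrt hνnb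
        have hP : Real.sqrt (ν * a) * Real.sqrt (ν * n * b)
            = Real.sqrt ((n : ℝ) * (ν * a)) * Real.sqrt (ν * b) := by
          rw [← Real.sqrt_mul hνa, ← Real.sqrt_mul (by positivity : (0:ℝ) ≤ (n : ℝ) * (ν * a))]
          ring_nf
        have e3 : Real.sqrt ((n : ℝ) * (ν * a)) ^ 2 = (n : ℝ) * (ν * a) :=
          Real.sq_sqrt (by positivity)
        have e4 : Real.sqrt (ν * b) ^ 2 = ν * b := Real.sq_sqrt hνb
        have hcrossb : 2 * (Real.sqrt (ν * a) * Real.sqrt (ν * n * b))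
            ≤ (n : ℝ) * (ν * a) + ν * b := by
          rw [hP]
          nlinarith [sq_nonneg (Real.sqrt ((n : ℝ) * (ν * a)) - Real.sqrt (ν * b)), e3, e4]
        push_cast
        nlinarith [hcs, h2, e1, e2, hcrossb]

/-- Lower bound on `ν(τ)`: if `O = ∑_λ O_λ` is a decomposition into pairwise
Hilbert–Schmidt-orthogonal eigenoperators of `ad_H` with `|λ| ≤ Λ`, and
`⟨·,·⟩_𝓔` is a positive-semidefinite Hermitian form whose induced seminorm
satisfies `‖B_μ‖_𝓔² ≤ ν ‖B_μ‖²` for every energy-window operator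
`B_μ = ∑_{|λ-μ| ≤ 1/τ} O_λ`, then `‖O‖_𝓔² ≤ ν (Λτ + 1) ‖O‖²`
(Frobenius norms via `‖X‖² = tr(X†X)`). -/
theorem nu_lower_bound {D : ℕ} {ι : Type*} [Fintype ι]
    (H : EuclideanSpace ℂ (Fin D) →L[ℂ] EuclideanSpace ℂ (Fin D))
    (hH : adjoint H = H)
    (lam : ι → ℝ)
    (O : ι → (EuclideanSpace ℂ (Fin D) →L[ℂ] EuclideanSpace ℂ (Fin D)))
    (heig : ∀ i, H ∘L O i - O i ∘L H = ((lam i : ℝ) : ℂ) • O i)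
    (horth : ∀ i j, i ≠ j →
      LinearMap.trace ℂ (EuclideanSpace ℂ (Fin D))
        ((adjoint (O i) ∘L O j :
            EuclideanSpace ℂ (Fin D) →L[ℂ] EuclideanSpace ℂ (Fin D)) :
          EuclideanSpace ℂ (Fin D) →ₗ[ℂ] EuclideanSpace ℂ (Fin D)) = 0)
    (Λ τ ν : ℝ) (hΛ : 0 < Λ) (hτ : 0 < τ)
    (hspec : ∀ i, |lam i| ≤ Λ)
    (innerE : (EuclideanSpace ℂ (Fin D) →L[ℂ] EuclideanSpace ℂ (Fin D)) →
      (EuclideanSpace ℂ (Fin D) →L[ℂ] EuclideanSpace ℂ (Fin D)) → ℂ)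
    (hsymm : ∀ A B, innerE A B = starRingEnd ℂ (innerE B A))
    (haddr : ∀ A B C, innerE A (B + C) = innerE A B + innerE A C)
    (hsmulr : ∀ (c : ℂ) A B, innerE A (c • B) = c * innerE A B)
    (hpos : ∀ A, 0 ≤ (innerE A A).re)
    (hwindow : ∀ μ : ℝ,
      (innerE (∑ i ∈ Finset.univ.filter (fun i => |lam i - μ| ≤ 1 / τ), O i)
          (∑ i ∈ Finset.univ.filter (fun i => |lam i - μ| ≤ 1 / τ), O i)).re
        ≤ ν * (LinearMap.trace ℂ (EuclideanSpace ℂ (Fin D))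
            ((adjoint (∑ i ∈ Finset.univ.filter (fun i => |lam i - μ| ≤ 1 / τ), O i)
                ∘L (∑ i ∈ Finset.univ.filter (fun i => |lam i - μ| ≤ 1 / τ), O i) :
              EuclideanSpace ℂ (Fin D) →L[ℂ] EuclideanSpace ℂ (Fin D)) :
              EuclideanSpace ℂ (Fin D) →ₗ[ℂ] EuclideanSpace ℂ (Fin D))).re) :
    (innerE (∑ i, O i) (∑ i, O i)).re
      ≤ ν * (Λ * τ + 1) *
        (LinearMap.trace ℂ (EuclideanSpace ℂ (Fin D))
          ((adjoint (∑ i, O i) ∘L (∑ i, O i) :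
              EuclideanSpace ℂ (Fin D) →L[ℂ] EuclideanSpace ℂ (Fin D)) :
            EuclideanSpace ℂ (Fin D) →ₗ[ℂ] EuclideanSpace ℂ (Fin D))).re := by
  have hΛτ : (0 : ℝ) ≤ Λ * τ := by positivity
  set n := Nat.floor (Λ * τ) + 1 with hn
  have hnΛτ : Λ * τ < (n : ℝ) := by
    rw [hn]
    push_cast
    exact Nat.lt_floor_add_one (Λ * τ)
  have hτ' : (0 : ℝ) < 2 / τ := by positivity
  have hmuleq : (Λ * τ) * (2 / τ) = 2 * Λ := by field_simp
  set c := Λ - (n : ℝ) * (2 / τ) with hc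
  have hcall : ∀ i, c < lam i := by
    intro i
    have h1 := (abs_le.mp (hspec i)).1
    have h2 : 2 * Λ < (n : ℝ) * (2 / τ) := by
      calc 2 * Λ = (Λ * τ) * (2 / τ) := hmuleq.symm
      _ < (n : ℝ) * (2 / τ) := by exact mul_lt_mul_of_pos_right hnΛτ hτ'
    rw [hc]
    linarith
  have hfil : Finset.univ.filter (fun i => c < lam i) = (Finset.univ : Finset ι) :=
    Finset.filter_true_of_mem (fun i _ => hcall i)
  have happ := key_lemma lam O horth τ ν hτ innerE hsymm haddr hsmulr hpos hwindow n c
    (by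
      intro i _
      have h2 := (abs_le.mp (hspec i)).2
      rw [hc]
      linarith)
  rw [hfil] at happ
  have hE0' : 0 ≤ (innerE (∑ i, O i) (∑ i, O i)).re := hpos _
  have hT0' := trace_re_nonneg' (∑ i, O i)
  have hn1 : (1 : ℝ) ≤ (n : ℝ) := by
    exact_mod_cast Nat.succ_le_succ (Nat.zero_le _)
  have hnle : (n : ℝ) ≤ Λ * τ + 1 := by
    rw [hn]
    push_cast
    linarith [Nat.floor_le hΛτ]
  have hνT : 0 ≤ ν * (LinearMap.trace ℂ (EuclideanSpace ℂ (Fin D))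
      ((adjoint (∑ i, O i) ∘L (∑ i, O i) :
          EuclideanSpace ℂ (Fin D) →L[ℂ] EuclideanSpace ℂ (Fin D)) :
        EuclideanSpace ℂ (Fin D) →ₗ[ℂ] EuclideanSpace ℂ (Fin D))).re := by
    by_contra hcon
    push_neg at hcon
    nlinarith [happ, hE0', hn1]
  nlinarith [happ, hνT, hnle]
end

section
/- Let $A, B$ be Hermitian operators on a finite-dimensional complex Hilbert space. Then the joint numerical range $W(A,B) = \{(\langle v, Av\rangle, \langle v, Bv\rangle) : \|v\| = 1\} \subseteq \mathbb{R}^2$ is a convex subset of the plane, provided the Hilbert space dimension is at least 3 (Brickman's theorem). -/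
open scoped InnerProductSpace ComplexConjugate
open ContinuousLinearMap

namespace BrickmanAux

variable {D : ℕ}

/-- Quadratic form expansion for a self-adjoint operator. -/
lemma cross (C : EuclideanSpace ℂ (Fin D) →L[ℂ] EuclideanSpace ℂ (Fin D))
    (hC : adjoint C = C) (x y : EuclideanSpace ℂ (Fin D)) (s t : ℝ) :
    (⟪(s:ℂ) • x + (t:ℂ) • y, C ((s:ℂ) • x + (t:ℂ) • y)⟫_ℂ).re
      = s^2 * (⟪x, C x⟫_ℂ).re + t^2 * (⟪y, C y⟫_ℂ).re
        + 2*s*t*(⟪x, C y⟫_ℂ).re := by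
  have hyx : ⟪y, C x⟫_ℂ = conj ⟪x, C y⟫_ℂ := by
    conv_lhs => rw [← hC]
    rw [ContinuousLinearMap.adjoint_inner_right, inner_conj_symm]
  simp only [map_add, map_smul, inner_add_left, inner_add_right, inner_smul_left,
    inner_smul_right, hyx, Complex.conj_ofReal]
  simp [Complex.add_re, Complex.mul_re, Complex.conj_re, Complex.conj_im]
  rw [show (⟪C y, x⟫_ℂ).re = (⟪x, C y⟫_ℂ).re by rw [← inner_conj_symm, Complex.conj_re]]
  ring

lemma re_inner_self (x : EuclideanSpace ℂ (Fin D)) : (⟪x, x⟫_ℂ).re = ‖x‖^2 := by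
  exact_mod_cast inner_self_eq_norm_sq (𝕜 := ℂ) x

/-- Norm expansion. -/
lemma norm_expand (x y : EuclideanSpace ℂ (Fin D)) (s t : ℝ) :
    ‖(s:ℂ) • x + (t:ℂ) • y‖^2
      = s^2 * ‖x‖^2 + t^2 * ‖y‖^2 + 2*s*t*(⟪x, y⟫_ℂ).re := by
  have h := cross (ContinuousLinearMap.id ℂ (EuclideanSpace ℂ (Fin D)))
    adjoint_id x y s t
  simp only [ContinuousLinearMap.id_apply] at h
  rw [← re_inner_self, ← re_inner_self, ← re_inner_self]
  exact h

/-- Scaling of the quadratic form. -/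
lemma smul_quad (C : EuclideanSpace ℂ (Fin D) →L[ℂ] EuclideanSpace ℂ (Fin D))
    (u : ℂ) (y : EuclideanSpace ℂ (Fin D)) :
    (⟪u • y, C (u • y)⟫_ℂ).re = ‖u‖^2 * (⟪y, C y⟫_ℂ).re := by
  simp only [map_smul, inner_smul_left, inner_smul_right]
  rw [← mul_assoc, mul_comm u (conj u), ← Complex.normSq_eq_conj_mul_self,
    Complex.re_ofReal_mul, Complex.normSq_eq_norm_sq]

lemma solve2 {r1 r2 d1 d2 : ℝ} (hr : r1 ≠ 0 ∨ r2 ≠ 0)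
    (e1 : -r2 * d1 + r1 * d2 = 0) (e2 : r1 * d1 + r2 * d2 = 0) :
    d1 = 0 ∧ d2 = 0 := by
  have hpos : (0:ℝ) < r1^2 + r2^2 := by
    rcases hr with h | h
    · have h1 : 0 < r1^2 := by positivity
      nlinarith [sq_nonneg r2]
    · have h1 : 0 < r2^2 := by positivity
      nlinarith [sq_nonneg r1]
  have h1 : (r1^2 + r2^2) * d1 = 0 := by linear_combination r1 * e2 - r2 * e1
  have h2 : (r1^2 + r2^2) * d2 = 0 := by linear_combination r2 * e2 + r1 * e1
  constructor
  · exact (mul_eq_zero.mp h1).resolve_left hpos.ne'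
  · exact (mul_eq_zero.mp h2).resolve_left hpos.ne' 

end BrickmanAux

open BrickmanAux

set_option maxHeartbeats 1000000 in
/-- Brickman's theorem: for Hermitian operators `A, B` on a complex Hilbert
space of dimension at least 3, the joint numerical range
`W(A,B) = {(⟨v,Av⟩, ⟨v,Bv⟩) : ‖v‖ = 1} ⊆ ℝ²` is convex. -/
theorem joint_numerical_range_convex {D : ℕ} (hD : 3 ≤ D)
    (A B : EuclideanSpace ℂ (Fin D) →L[ℂ] EuclideanSpace ℂ (Fin D))
    (hA : adjoint A = A) (hB : adjoint B = B) :
    Convex ℝ {x : ℝ × ℝ | ∃ v : EuclideanSpace ℂ (Fin D), ‖v‖ = 1 ∧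
      x = ((⟪v, A v⟫_ℂ).re, (⟪v, B v⟫_ℂ).re)} := by
  intro P hP Q hQ a b ha hb hab
  by_cases hpq : P = Q
  · subst hpq
    rw [← add_smul, hab, one_smul]
    exact hP
  obtain ⟨x, hx, hPx⟩ := hP
  obtain ⟨y, hy, hQy⟩ := hQ
  set p1 : ℝ := (⟪x, A x⟫_ℂ).re with hp1
  set p2 : ℝ := (⟪x, B x⟫_ℂ).re with hp2
  set q1 : ℝ := (⟪y, A y⟫_ℂ).re with hq1
  set q2 : ℝ := (⟪y, B y⟫_ℂ).re with hq2
  set r1 : ℝ := q1 - p1 with hr1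
  set r2 : ℝ := q2 - p2 with hr2
  set c : ℝ := -r2 * p1 + r1 * p2 with hc
  have hrne : r1 ≠ 0 ∨ r2 ≠ 0 := by
    by_contra hcon
    push_neg at hcon
    apply hpq
    have e1 : q1 = p1 := by have := hcon.1; rw [hr1, sub_eq_zero] at this; exact this
    have e2 : q2 = p2 := by have := hcon.2; rw [hr2, sub_eq_zero] at this; exact this
    rw [hPx, hQy, e1, e2]
  -- phase choice
  set z : ℂ := (-r2 : ℂ) * ⟪x, A y⟫_ℂ + (r1 : ℂ) * ⟪x, B y⟫_ℂ - (c : ℂ) * ⟪x, y⟫_ℂ with hz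
  set u : ℂ := if z = 0 then 1 else Complex.I * (conj z / (‖z‖ : ℂ)) with hudef
  have hu : ‖u‖ = 1 := by
    rw [hudef]
    split_ifs with h
    · simp
    · have hzn : ‖z‖ ≠ 0 := norm_ne_zero_iff.mpr h
      simp only [norm_mul, norm_div, Complex.norm_I, RCLike.norm_conj, Complex.norm_real,
        norm_norm, one_mul]
      exact div_self hzn
  have huz : (u * z).re = 0 := by
    rw [hudef]
    split_ifs with h
    · simp [h]
    · have hzn : (‖z‖ : ℝ) ≠ 0 := norm_ne_zero_iff.mpr h
      have : Complex.I * (conj z / (‖z‖ : ℂ)) * z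
          = Complex.I * ((Complex.normSq z / ‖z‖ : ℝ) : ℂ) := by
        push_cast
        rw [Complex.normSq_eq_conj_mul_self]
        ring
      rw [this]
      simp [Complex.mul_re]
  set y' : EuclideanSpace ℂ (Fin D) := u • y with hy'def
  have hy'norm : ‖y'‖ = 1 := by rw [hy'def, norm_smul, hu, hy]; ring
  have hy'A : (⟪y', A y'⟫_ℂ).re = q1 := by rw [hy'def, smul_quad, hu]; simp [hq1]
  have hy'B : (⟪y', B y'⟫_ℂ).re = q2 := by rw [hy'def, smul_quad, hu]; simp [hq2]
  -- the key vanishing cross term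
  have hcross0 : -r2 * (⟪x, A y'⟫_ℂ).re + r1 * (⟪x, B y'⟫_ℂ).re - c * (⟪x, y'⟫_ℂ).re = 0 := by
    have h1 : (-r2 : ℂ) * ⟪x, A y'⟫_ℂ + (r1 : ℂ) * ⟪x, B y'⟫_ℂ - (c : ℂ) * ⟪x, y'⟫_ℂ
        = u * z := by
      rw [hy'def]
      simp only [map_smul, inner_smul_right, hz]
      ring
    have h2 := congrArg Complex.re h1
    rw [huz] at h2
    simpa [Complex.add_re, Complex.sub_re, Complex.mul_re, Complex.ofReal_re,
      Complex.ofReal_im] using h2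
  -- the path
  set v : ℝ → EuclideanSpace ℂ (Fin D) :=
    fun t => ((1 - t : ℝ) : ℂ) • x + ((t : ℝ) : ℂ) • y' with hvdef
  have hv0 : v 0 = x := by simp [hvdef]
  have hv1 : v 1 = y' := by simp [hvdef]
  have hvnorm : ∀ t, ‖v t‖^2 = (1-t)^2 + t^2 + 2*(1-t)*t*(⟪x, y'⟫_ℂ).re := by
    intro t
    have := norm_expand x y' (1-t) t
    rwa [hx, hy'norm, one_pow, mul_one, mul_one] at this
  have hvA : ∀ t, (⟪v t, A (v t)⟫_ℂ).re
      = (1-t)^2 * p1 + t^2 * q1 + 2*(1-t)*t*(⟪x, A y'⟫_ℂ).re := by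
    intro t
    have := cross A hA x y' (1-t) t
    rwa [hy'A, ← hp1] at this
  have hvB : ∀ t, (⟪v t, B (v t)⟫_ℂ).re
      = (1-t)^2 * p2 + t^2 * q2 + 2*(1-t)*t*(⟪x, B y'⟫_ℂ).re := by
    intro t
    have := cross B hB x y' (1-t) t
    rwa [hy'B, ← hp2] at this
  have hvne : ∀ t ∈ Set.Icc (0:ℝ) 1, v t ≠ 0 := by
    intro t ht h0
    have hn := hvnorm t
    rw [h0, norm_zero] at hn
    have hρabs : |(⟪x, y'⟫_ℂ).re| ≤ 1 := by
      calc |(⟪x, y'⟫_ℂ).re| ≤ ‖(⟪x, y'⟫_ℂ)‖ := Complex.abs_re_le_norm _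
        _ ≤ ‖x‖ * ‖y'‖ := norm_inner_le_norm x y'
        _ = 1 := by rw [hx, hy'norm]; ring
    obtain ⟨hρ1, hρ2⟩ := abs_le.mp hρabs
    have hprod : 0 ≤ 2*((1-t)*t)*(1+(⟪x, y'⟫_ℂ).re) := by
      have h1 : 0 ≤ (1-t)*t := mul_nonneg (by linarith [ht.2]) ht.1
      have h2 : 0 ≤ 1+(⟪x, y'⟫_ℂ).re := by linarith
      nlinarith
    have hsq : (1 - 2*t)^2 ≤ 0 := by nlinarith [hn, hprod]
    have hsq0 : (1 - 2*t)^2 = 0 := le_antisymm hsq (sq_nonneg _)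
    have ht2 : t = 1/2 := by
      have h0' : 1 - 2*t = 0 := by
        have := sq_eq_zero_iff.mp hsq0
        exact this
      linarith
    subst ht2
    -- then x + y' = 0
    have hxy : y' = -x := by
      have h12 : ((1/2 : ℝ) : ℂ) • x + ((1/2 : ℝ) : ℂ) • y' = 0 := by
        have hv12 : v (1/2) = ((1/2 : ℝ) : ℂ) • x + ((1/2 : ℝ) : ℂ) • y' := by
          rw [hvdef]; norm_num
        rw [← hv12]; exact h0
      have h2 : x + y' = 0 := by
        have hne : ((1/2 : ℝ) : ℂ) ≠ 0 := by norm_num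
        have := h12
        rw [← smul_add] at this
        exact (smul_eq_zero.mp this).resolve_left hne
      exact eq_neg_of_add_eq_zero_right h2
    apply hpq
    have e1 : q1 = p1 := by
      rw [← hy'A, hxy, map_neg, inner_neg_neg]
    have e2 : q2 = p2 := by
      rw [← hy'B, hxy, map_neg, inner_neg_neg]
    rw [hPx, hQy, e1, e2]
  -- normalized path
  set w : ℝ → EuclideanSpace ℂ (Fin D) :=
    fun t => ((‖v t‖⁻¹ : ℝ) : ℂ) • v t with hwdef
  have hwnorm : ∀ t ∈ Set.Icc (0:ℝ) 1, ‖w t‖ = 1 := by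
    intro t ht
    have hK : ‖v t‖ ≠ 0 := norm_ne_zero_iff.mpr (hvne t ht)
    rw [hwdef]
    simp only [norm_smul, Complex.norm_real, Real.norm_eq_abs, abs_inv, abs_norm]
    field_simp
  have hwA : ∀ t, (⟪w t, A (w t)⟫_ℂ).re = ‖v t‖⁻¹^2 * (⟪v t, A (v t)⟫_ℂ).re := by
    intro t
    rw [hwdef, smul_quad]
    norm_num
  have hwB : ∀ t, (⟪w t, B (w t)⟫_ℂ).re = ‖v t‖⁻¹^2 * (⟪v t, B (v t)⟫_ℂ).re := by
    intro t
    rw [hwdef, smul_quad]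
    norm_num
  -- the line constraint
  have hline : ∀ t ∈ Set.Icc (0:ℝ) 1,
      -r2 * (⟪w t, A (w t)⟫_ℂ).re + r1 * (⟪w t, B (w t)⟫_ℂ).re = c := by
    intro t ht
    have hK : ‖v t‖ ≠ 0 := norm_ne_zero_iff.mpr (hvne t ht)
    have hKsq : ‖v t‖⁻¹^2 * ‖v t‖^2 = 1 := by field_simp
    rw [hwA, hwB, hvA, hvB]
    have hcq : -r2 * q1 + r1 * q2 = c := by rw [hc, hr1, hr2]; ring
    have expand : -r2 * ((1-t)^2 * p1 + t^2 * q1 + 2*(1-t)*t*(⟪x, A y'⟫_ℂ).re)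
        + r1 * ((1-t)^2 * p2 + t^2 * q2 + 2*(1-t)*t*(⟪x, B y'⟫_ℂ).re)
        = c * ‖v t‖^2 := by
      rw [hvnorm t]
      linear_combination (-(1-t)^2) * hc + t^2 * hcq + 2*(1-t)*t * hcross0
    linear_combination (‖v t‖⁻¹^2) * expand + c * hKsq
  -- the IVT function
  set h : ℝ → ℝ := fun t => r1 * (⟪w t, A (w t)⟫_ℂ).re + r2 * (⟪w t, B (w t)⟫_ℂ).re
    with hhdef
  have hw0 : w 0 = x := by
    rw [hwdef]
    simp [hv0, hx]
  have hw1 : w 1 = y' := by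
    rw [hwdef]
    simp [hv1, hy'norm]
  have hh0 : h 0 = r1 * p1 + r2 * p2 := by
    simp only [hhdef]
    rw [hw0, ← hp1, ← hp2]
  have hh1 : h 1 = r1 * q1 + r2 * q2 := by
    simp only [hhdef]
    rw [hw1, hy'A, hy'B]
  -- continuity
  have hvcont : Continuous v := by
    rw [hvdef]
    fun_prop
  have hwcont : ContinuousOn w (Set.Icc 0 1) := by
    apply ContinuousOn.fun_smul
    · apply Continuous.comp_continuousOn Complex.continuous_ofReal
      apply ContinuousOn.inv₀
      · exact (hvcont.norm).continuousOn
      · intro t ht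
        exact norm_ne_zero_iff.mpr (hvne t ht)
    · exact hvcont.continuousOn
  have hhcont : ContinuousOn h (Set.Icc 0 1) := by
    rw [hhdef]
    apply ContinuousOn.add
    · exact continuousOn_const.mul
        ((Complex.continuous_re.comp (continuous_id.inner A.continuous)).comp_continuousOn hwcont)
    · exact continuousOn_const.mul
        ((Complex.continuous_re.comp (continuous_id.inner B.continuous)).comp_continuousOn hwcont)
  -- IVT
  set τ : ℝ := a * (r1 * p1 + r2 * p2) + b * (r1 * q1 + r2 * q2) with hτ
  have hmem : τ ∈ Set.uIcc (h 0) (h 1) := by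
    rw [hh0, hh1, Set.mem_uIcc]
    have key : τ = (r1*p1+r2*p2) + b*((r1*q1+r2*q2) - (r1*p1+r2*p2)) := by
      rw [hτ]; linear_combination (r1*p1+r2*p2) * hab
    have key2 : τ = (r1*q1+r2*q2) + a*((r1*p1+r2*p2) - (r1*q1+r2*q2)) := by
      rw [hτ]; linear_combination (r1*q1+r2*q2) * hab
    rcases le_total (r1 * p1 + r2 * p2) (r1 * q1 + r2 * q2) with hle | hle
    · left
      constructor
      · linarith [mul_nonneg hb (sub_nonneg.mpr hle), key]
      · linarith [mul_nonpos_of_nonneg_of_nonpos ha (sub_nonpos.mpr hle), key2]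
    · right
      constructor
      · linarith [mul_nonneg ha (sub_nonneg.mpr hle), key2]
      · linarith [mul_nonpos_of_nonneg_of_nonpos hb (sub_nonpos.mpr hle), key]
  have := intermediate_value_uIcc (f := h) (a := (0:ℝ)) (b := 1)
    (by rwa [Set.uIcc_of_le (by norm_num : (0:ℝ) ≤ 1)])
  obtain ⟨t₀, ht₀, hht₀⟩ := this hmem
  rw [Set.uIcc_of_le (by norm_num : (0:ℝ) ≤ 1)] at ht₀
  -- conclude
  refine ⟨w t₀, hwnorm t₀ ht₀, ?_⟩
  have hconstr1 : -r2 * (⟪w t₀, A (w t₀)⟫_ℂ).re + r1 * (⟪w t₀, B (w t₀)⟫_ℂ).re = c :=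
    hline t₀ ht₀
  have hconstr2 : r1 * (⟪w t₀, A (w t₀)⟫_ℂ).re + r2 * (⟪w t₀, B (w t₀)⟫_ℂ).re = τ := hht₀
  set m1 : ℝ := a * p1 + b * q1 with hm1
  set m2 : ℝ := a * p2 + b * q2 with hm2
  have hgoal1 : -r2 * m1 + r1 * m2 = c := by
    rw [hm1, hm2, hc]
    have h' : -r2 * q1 + r1 * q2 = -r2 * p1 + r1 * p2 := by rw [hr1, hr2]; ring
    linear_combination b * h' + (-r2*p1 + r1*p2) * hab
  have hgoal2 : r1 * m1 + r2 * m2 = τ := by rw [hm1, hm2, hτ]; ring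
  obtain ⟨hd1, hd2⟩ := solve2 hrne
    (d1 := (⟪w t₀, A (w t₀)⟫_ℂ).re - m1) (d2 := (⟪w t₀, B (w t₀)⟫_ℂ).re - m2)
    (by linear_combination hconstr1 - hgoal1) (by linear_combination hconstr2 - hgoal2)
  have e1 : (⟪w t₀, A (w t₀)⟫_ℂ).re = m1 := by linarith
  have e2 : (⟪w t₀, B (w t₀)⟫_ℂ).re = m2 := by linarith
  have hsum : a • P + b • Q = (m1, m2) := by
    rw [hPx, hQy]
    simp [Prod.ext_iff, Prod.smul_mk, Prod.mk_add_mk, smul_eq_mul, hm1, hm2]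
  rw [hsum]
  exact Prod.ext_iff.mpr ⟨e1.symm, e2.symm⟩
end
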